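/- The closure of Ω_N := ⋃_{λ ∈ 𝕋} (λΠ)^N equals ⋃_{λ ∈ 𝕋} (λ·clos(Π))^N, where clos(Π) is the closed right half-plane. -/

import Mathlib

open Complex

/-- `Ω_N = ⋃_{λ ∈ 𝕋} (λΠ)^N`, where `Π` is the open right half-plane. -/
def Omega (N : ℕ) : Set (Fin N → ℂ) :=
  {z | ∃ l : ℂ, ‖l‖ = 1 ∧ ∀ k, ∃ w : ℂ, 0 < w.re ∧ z k = l * w}

/-- `clos(Ω_N) = ⋃_{λ ∈ 𝕋} (λ · clos(Π))^N`, where `clos(Π)` is the closed right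
half-plane. -/
theorem stmt_6 (N : ℕ) :
    closure (Omega N) =
      {z : Fin N → ℂ | ∃ l : ℂ, ‖l‖ = 1 ∧
        ∀ k, ∃ w : ℂ, 0 ≤ w.re ∧ z k = l * w} := by
  apply Set.Subset.antisymm
  · apply closure_minimal
    · rintro z ⟨l, hl, hw⟩
      exact ⟨l, hl, fun k => (hw k).imp fun w ⟨h1, h2⟩ => ⟨h1.le, h2⟩⟩
    · have heq : {z : Fin N → ℂ | ∃ l : ℂ, ‖l‖ = 1 ∧
          ∀ k, ∃ w : ℂ, 0 ≤ w.re ∧ z k = l * w} =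
          Prod.snd '' {p : Metric.sphere (0:ℂ) 1 × (Fin N → ℂ) |
            ∀ k, 0 ≤ ((starRingEnd ℂ) (p.1 : ℂ) * p.2 k).re} := by
        ext z
        constructor
        · rintro ⟨l, hl, hw⟩
          have hl' : (l : ℂ) ∈ Metric.sphere (0:ℂ) 1 := by
            simpa [mem_sphere_zero_iff_norm] using hl
          refine ⟨(⟨l, hl'⟩, z), fun k => ?_, rfl⟩
          obtain ⟨w, h1, h2⟩ := hw k
          have hnl : (starRingEnd ℂ) l * l = 1 := by
            rw [← Complex.normSq_eq_conj_mul_self]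
            simp [Complex.normSq_eq_norm_sq, hl]
          simpa [h2, ← mul_assoc, hnl] using h1
        · rintro ⟨⟨⟨l, hl⟩, z'⟩, hp, rfl⟩
          have hl1 : ‖l‖ = 1 := by
            simpa [mem_sphere_zero_iff_norm] using hl
          have hnl : l * (starRingEnd ℂ) l = 1 := by
            rw [Complex.mul_conj, Complex.normSq_eq_norm_sq, hl1]
            norm_num
          refine ⟨l, hl1, fun k => ⟨(starRingEnd ℂ) l * z' k, hp k, ?_⟩⟩
          rw [← mul_assoc, hnl, one_mul]
      rw [heq]
      apply isClosedMap_snd_of_compactSpace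
      rw [Set.setOf_forall]
      apply isClosed_iInter (fun k => ?_)
      exact isClosed_le continuous_const (by fun_prop)
  · rintro z ⟨l, hl, hw⟩
    choose w hre hzw using hw
    have htend : Filter.Tendsto (fun ε : ℝ => fun k => l * (w k + ε))
        (nhdsWithin 0 (Set.Ioi 0)) (nhds z) := by
      rw [tendsto_pi_nhds]
      intro k
      rw [hzw k]
      have : Filter.Tendsto (fun ε : ℝ => l * (w k + ε)) (nhds 0) (nhds (l * w k)) := by
        have h : Continuous (fun ε : ℝ => l * (w k + (ε : ℂ))) := by fun_prop
        simpa using h.tendsto 0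
      exact this.mono_left nhdsWithin_le_nhds
    refine mem_closure_of_tendsto htend ?_
    filter_upwards [self_mem_nhdsWithin] with ε (hε : 0 < ε)
    refine ⟨l, hl, fun k => ⟨w k + ε, ?_, rfl⟩⟩
    simpa using add_pos_of_nonneg_of_pos (hre k) hε
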